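/- The subspace Δ = X⊗K[T] + Y⊗T·K[T] + Z⊗(T-1)·K[T] of the three-point loop algebra sl2 ⊗ K[T,T^{-1},(T-1)^{-1}] is closed under the Lie bracket, i.e., Δ is a Lie subalgebra. -/
import Mathlib

set_option synthInstance.maxHeartbeats 1000000
set_option maxHeartbeats 1000000

namespace TetPaper
variable {K : Type*} [Field K]

/-- Auxiliary bracket for `sl2` in the `X,Y,Z` coordinates, where
`[X,Y] = 2X+2Y`, `[Y,Z] = 2Y+2Z`, `[Z,X] = 2Z+2X`. -/
def sl2xb (u v : Fin 3 → K) : Fin 3 → K :=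
  ![2*(u 0 * v 1 - u 1 * v 0) + 2*(u 2 * v 0 - u 0 * v 2),
    2*(u 0 * v 1 - u 1 * v 0) + 2*(u 1 * v 2 - u 2 * v 1),
    2*(u 2 * v 0 - u 0 * v 2) + 2*(u 1 * v 2 - u 2 * v 1)]

lemma sl2xb_add_lie (x y z : Fin 3 → K) : sl2xb (x + y) z = sl2xb x z + sl2xb y z := by
  funext i; fin_cases i <;> simp [sl2xb] <;> ring

lemma sl2xb_lie_add (x y z : Fin 3 → K) : sl2xb x (y + z) = sl2xb x y + sl2xb x z := by
  funext i; fin_cases i <;> simp [sl2xb] <;> ring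

lemma sl2xb_lie_self (x : Fin 3 → K) : sl2xb x x = 0 := by
  funext i; fin_cases i <;> simp [sl2xb, -mul_eq_zero] <;> ring

lemma sl2xb_leibniz (x y z : Fin 3 → K) :
    sl2xb x (sl2xb y z) = sl2xb (sl2xb x y) z + sl2xb y (sl2xb x z) := by
  funext i; fin_cases i <;> simp [sl2xb] <;> ring

lemma sl2xb_smul (t : K) (x y : Fin 3 → K) : sl2xb x (t • y) = t • sl2xb x y := by
  funext i; fin_cases i <;> simp [sl2xb] <;> ring

end TetPaper

/-- The Lie algebra over `K` with basis `X, Y, Z` and brackets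
`[X,Y] = 2X+2Y`, `[Y,Z] = 2Y+2Z`, `[Z,X] = 2Z+2X`. -/
def Sl2X (K : Type*) := Fin 3 → K

noncomputable instance {K : Type*} [Field K] : AddCommGroup (Sl2X K) :=
  inferInstanceAs (AddCommGroup (Fin 3 → K))

noncomputable instance {K : Type*} [Field K] : Module K (Sl2X K) :=
  inferInstanceAs (Module K (Fin 3 → K))

noncomputable instance {K : Type*} [Field K] : LieRing (Sl2X K) where
  bracket u v := TetPaper.sl2xb u v
  add_lie x y z := TetPaper.sl2xb_add_lie x y z
  lie_add x y z := TetPaper.sl2xb_lie_add x y z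
  lie_self x := TetPaper.sl2xb_lie_self x
  leibniz_lie x y z := TetPaper.sl2xb_leibniz x y z

noncomputable instance {K : Type*} [Field K] : LieAlgebra K (Sl2X K) where
  lie_smul t x y := TetPaper.sl2xb_smul t x y

namespace Sl2X
variable (K : Type*) [Field K]
/-- The basis vector `X`. -/
noncomputable def Xv : Sl2X K := (![1,0,0] : Fin 3 → K)
/-- The basis vector `Y`. -/
noncomputable def Yv : Sl2X K := (![0,1,0] : Fin 3 → K)
/-- The basis vector `Z`. -/
noncomputable def Zv : Sl2X K := (![0,0,1] : Fin 3 → K)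
end Sl2X
open scoped Polynomial

/-- The algebra `K[T, T⁻¹, (T-1)⁻¹]`, realized as the subalgebra of the field of
rational functions generated by `T`, `T⁻¹` and `(T-1)⁻¹`. -/
noncomputable def Arat (K : Type*) [Field K] : Subalgebra K (RatFunc K) :=
  Algebra.adjoin K {RatFunc.X, RatFunc.X⁻¹, (RatFunc.X - 1)⁻¹}

/-- The element `T` of `Arat K`. -/
noncomputable def tA (K : Type*) [Field K] : Arat K :=
  ⟨RatFunc.X, Algebra.subset_adjoin (by simp)⟩

/-- The element `T⁻¹` of `Arat K`. -/
noncomputable def tiA (K : Type*) [Field K] : Arat K :=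
  ⟨RatFunc.X⁻¹, Algebra.subset_adjoin (by simp)⟩

/-- The element `T' = 1 - T⁻¹` of `Arat K`. -/
noncomputable def tpA (K : Type*) [Field K] : Arat K := 1 - tiA K

/-- The element `T'' = (1-T)⁻¹` of `Arat K`. -/
noncomputable def tppA (K : Type*) [Field K] : Arat K :=
  ⟨(1 - RatFunc.X)⁻¹, by
    have h1 : (RatFunc.X - 1)⁻¹ ∈ Arat K := Algebra.subset_adjoin (by simp)
    have h2 : ((1 : RatFunc K) - RatFunc.X)⁻¹ = -((RatFunc.X - 1)⁻¹) := by
      rw [← neg_sub, inv_neg]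
    rw [h2]; exact neg_mem h1⟩

open scoped TensorProduct

/-- The three-point loop algebra `sl2 ⊗ K[T,T⁻¹,(T-1)⁻¹]`
(with the algebra factor written on the left). -/
noncomputable abbrev TPL (K : Type*) [Field K] := (Arat K) ⊗[K] Sl2X K

/-- The subspace `Δ = X ⊗ K[T] + Y ⊗ T·K[T] + Z ⊗ (T-1)·K[T]` of the
three-point loop algebra. -/
noncomputable def DeltaTPL (K : Type*) [Field K] : Submodule K (TPL K) :=
  Submodule.span K
    (Set.range (fun n : ℕ => ((tA K) ^ n) ⊗ₜ[K] Sl2X.Xv K) ∪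
     Set.range (fun n : ℕ => (tA K * (tA K) ^ n) ⊗ₜ[K] Sl2X.Yv K) ∪
     Set.range (fun n : ℕ => ((tA K - 1) * (tA K) ^ n) ⊗ₜ[K] Sl2X.Zv K))


section StmtAux
variable (K : Type*) [Field K]
open Sl2X TetPaper

lemma memX (n : ℕ) : ((tA K) ^ n) ⊗ₜ[K] Sl2X.Xv K ∈ DeltaTPL K :=
  Submodule.subset_span (Or.inl (Or.inl ⟨n, rfl⟩))

lemma memY (n : ℕ) : (tA K * (tA K) ^ n) ⊗ₜ[K] Sl2X.Yv K ∈ DeltaTPL K :=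
  Submodule.subset_span (Or.inl (Or.inr ⟨n, rfl⟩))

lemma memZ (n : ℕ) : ((tA K - 1) * (tA K) ^ n) ⊗ₜ[K] Sl2X.Zv K ∈ DeltaTPL K :=
  Submodule.subset_span (Or.inr ⟨n, rfl⟩)

lemma mem_of_eq {a b : Arat K} {w : Sl2X K} (h : a = b) (hb : b ⊗ₜ[K] w ∈ DeltaTPL K) :
    a ⊗ₜ[K] w ∈ DeltaTPL K := by rw [h]; exact hb

lemma memXm1 (k : ℕ) : ((tA K - 1) * (tA K) ^ k) ⊗ₜ[K] Xv K ∈ DeltaTPL K := by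
  have h : (tA K - 1) * (tA K) ^ k = (tA K) ^ (k + 1) - (tA K) ^ k := by ring
  rw [h, TensorProduct.sub_tmul]
  exact sub_mem (memX K (k+1)) (memX K k)

lemma memYm1 (k : ℕ) : ((tA K - 1) * (tA K * (tA K) ^ k)) ⊗ₜ[K] Yv K ∈ DeltaTPL K := by
  have h : (tA K - 1) * (tA K * (tA K) ^ k)
      = tA K * (tA K) ^ (k + 1) - tA K * (tA K) ^ k := by ring
  rw [h, TensorProduct.sub_tmul]
  exact sub_mem (memY K (k+1)) (memY K k)

lemma bracket_def' (u v : Sl2X K) : ⁅u, v⁆ = TetPaper.sl2xb u v := rfl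

lemma bXY : ⁅Xv K, Yv K⁆ = (2:K) • Xv K + (2:K) • Yv K := by
  rw [bracket_def']
  exact show TetPaper.sl2xb (![1,0,0] : Fin 3 → K) ![0,1,0]
      = (2:K) • (![1,0,0] : Fin 3 → K) + (2:K) • (![0,1,0] : Fin 3 → K) by
    funext i; fin_cases i <;> simp [TetPaper.sl2xb]

lemma bYX : ⁅Yv K, Xv K⁆ = (-2:K) • Xv K + (-2:K) • Yv K := by
  rw [bracket_def']
  exact show TetPaper.sl2xb (![0,1,0] : Fin 3 → K) ![1,0,0]
      = (-2:K) • (![1,0,0] : Fin 3 → K) + (-2:K) • (![0,1,0] : Fin 3 → K) by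
    funext i; fin_cases i <;> simp [TetPaper.sl2xb]

lemma bYZ : ⁅Yv K, Zv K⁆ = (2:K) • Yv K + (2:K) • Zv K := by
  rw [bracket_def']
  exact show TetPaper.sl2xb (![0,1,0] : Fin 3 → K) ![0,0,1]
      = (2:K) • (![0,1,0] : Fin 3 → K) + (2:K) • (![0,0,1] : Fin 3 → K) by
    funext i; fin_cases i <;> simp [TetPaper.sl2xb]

lemma bZY : ⁅Zv K, Yv K⁆ = (-2:K) • Yv K + (-2:K) • Zv K := by
  rw [bracket_def']
  exact show TetPaper.sl2xb (![0,0,1] : Fin 3 → K) ![0,1,0]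
      = (-2:K) • (![0,1,0] : Fin 3 → K) + (-2:K) • (![0,0,1] : Fin 3 → K) by
    funext i; fin_cases i <;> simp [TetPaper.sl2xb]

lemma bZX : ⁅Zv K, Xv K⁆ = (2:K) • Zv K + (2:K) • Xv K := by
  rw [bracket_def']
  exact show TetPaper.sl2xb (![0,0,1] : Fin 3 → K) ![1,0,0]
      = (2:K) • (![0,0,1] : Fin 3 → K) + (2:K) • (![1,0,0] : Fin 3 → K) by
    funext i; fin_cases i <;> simp [TetPaper.sl2xb]

lemma bXZ : ⁅Xv K, Zv K⁆ = (-2:K) • Zv K + (-2:K) • Xv K := by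
  rw [bracket_def']
  exact show TetPaper.sl2xb (![1,0,0] : Fin 3 → K) ![0,0,1]
      = (-2:K) • (![0,0,1] : Fin 3 → K) + (-2:K) • (![1,0,0] : Fin 3 → K) by
    funext i; fin_cases i <;> simp [TetPaper.sl2xb]

set_option maxHeartbeats 4000000 in
lemma lie_smulK_right (r : K) (x y : TPL K) : ⁅x, r • y⁆ = r • ⁅x, y⁆ := by
  have h := lie_smul (algebraMap K (Arat K) r) x y
  rw [algebra_compatible_smul (Arat K) r y, h, ← algebra_compatible_smul (Arat K) r ⁅x, y⁆]

set_option maxHeartbeats 4000000 in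
lemma lie_smulK_left (r : K) (x y : TPL K) : ⁅r • x, y⁆ = r • ⁅x, y⁆ := by
  have h := smul_lie (algebraMap K (Arat K) r) x y
  rw [algebra_compatible_smul (Arat K) r x, h, ← algebra_compatible_smul (Arat K) r ⁅x, y⁆]

end StmtAux

/-- `Δ` is closed under the Lie bracket, i.e. it is a Lie subalgebra
of the three-point loop algebra. -/
theorem stmt12 (K : Type*) [Field K] [CharZero K] :
    ∀ u ∈ DeltaTPL K, ∀ v ∈ DeltaTPL K, ⁅u, v⁆ ∈ DeltaTPL K := by
  intro u hu v hv
  induction hu, hv using Submodule.span_induction₂ with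
  | mem_mem x y hx hy =>
    have key : ∀ (a b : Arat K) (u v : Sl2X K),
        ⁅(a ⊗ₜ[K] u : TPL K), b ⊗ₜ[K] v⁆ = (a * b) ⊗ₜ[K] ⁅u, v⁆ :=
      fun a b u v => rfl
    rcases hx with (⟨m, rfl⟩ | ⟨m, rfl⟩) | ⟨m, rfl⟩ <;>
      rcases hy with (⟨n, rfl⟩ | ⟨n, rfl⟩) | ⟨n, rfl⟩ <;> rw [key]
    · rw [lie_self, TensorProduct.tmul_zero]; exact zero_mem _
    · rw [bXY, TensorProduct.tmul_add, TensorProduct.tmul_smul, TensorProduct.tmul_smul]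
      exact add_mem
        (Submodule.smul_mem _ _ (mem_of_eq K (b := (tA K)^(m+n+1)) (by ring) (memX K _)))
        (Submodule.smul_mem _ _ (mem_of_eq K (b := tA K * (tA K)^(m+n)) (by ring) (memY K _)))
    · rw [bXZ, TensorProduct.tmul_add, TensorProduct.tmul_smul, TensorProduct.tmul_smul]
      exact add_mem
        (Submodule.smul_mem _ _ (mem_of_eq K (b := (tA K - 1) * (tA K)^(m+n)) (by ring) (memZ K _)))
        (Submodule.smul_mem _ _ (mem_of_eq K (b := (tA K - 1) * (tA K)^(m+n)) (by ring) (memXm1 K _)))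
    · rw [bYX, TensorProduct.tmul_add, TensorProduct.tmul_smul, TensorProduct.tmul_smul]
      exact add_mem
        (Submodule.smul_mem _ _ (mem_of_eq K (b := (tA K)^(m+n+1)) (by ring) (memX K _)))
        (Submodule.smul_mem _ _ (mem_of_eq K (b := tA K * (tA K)^(m+n)) (by ring) (memY K _)))
    · rw [lie_self, TensorProduct.tmul_zero]; exact zero_mem _
    · rw [bYZ, TensorProduct.tmul_add, TensorProduct.tmul_smul, TensorProduct.tmul_smul]
      exact add_mem
        (Submodule.smul_mem _ _ (mem_of_eq K (b := (tA K - 1) * (tA K * (tA K)^(m+n))) (by ring) (memYm1 K _)))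
        (Submodule.smul_mem _ _ (mem_of_eq K (b := (tA K - 1) * (tA K)^(m+n+1)) (by ring) (memZ K _)))
    · rw [bZX, TensorProduct.tmul_add, TensorProduct.tmul_smul, TensorProduct.tmul_smul]
      exact add_mem
        (Submodule.smul_mem _ _ (mem_of_eq K (b := (tA K - 1) * (tA K)^(m+n)) (by ring) (memZ K _)))
        (Submodule.smul_mem _ _ (mem_of_eq K (b := (tA K - 1) * (tA K)^(m+n)) (by ring) (memXm1 K _)))
    · rw [bZY, TensorProduct.tmul_add, TensorProduct.tmul_smul, TensorProduct.tmul_smul]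
      exact add_mem
        (Submodule.smul_mem _ _ (mem_of_eq K (b := (tA K - 1) * (tA K * (tA K)^(m+n))) (by ring) (memYm1 K _)))
        (Submodule.smul_mem _ _ (mem_of_eq K (b := (tA K - 1) * (tA K)^(m+n+1)) (by ring) (memZ K _)))
    · rw [lie_self, TensorProduct.tmul_zero]; exact zero_mem _
  | zero_left y hy =>
    have h0 : ⁅(0 : TPL K), y⁆ = 0 := zero_lie y
    rw [h0]; exact zero_mem _
  | zero_right x hx =>
    have h0 : ⁅x, (0 : TPL K)⁆ = 0 := lie_zero x
    rw [h0]; exact zero_mem _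
  | add_left x y z hx hy hz h1 h2 =>
    have h : ⁅x + y, z⁆ = ⁅x, z⁆ + ⁅y, z⁆ := add_lie x y z
    rw [h]; exact add_mem h1 h2
  | add_right x y z hx hy hz h1 h2 =>
    have h : ⁅x, y + z⁆ = ⁅x, y⁆ + ⁅x, z⁆ := lie_add x y z
    rw [h]; exact add_mem h1 h2
  | smul_left r x y hx hy h =>
    rw [lie_smulK_left K r x y]; exact Submodule.smul_mem _ _ h
  | smul_right r x y hx hy h =>
    rw [lie_smulK_right K r x y]; exact Submodule.smul_mem _ _ h
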